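/- Let R be a commutative ring and a, b ∈ R with a ≠ 0. Then a and b are very strongly associates in R[X] if and only if a and b are very strongly associates in R and ann(b) ⊆ nil(R). -/
import Mathlib


/-- `a` and `b` are very strongly associates in `S`: they generate the same ideal,
and either `a = b = 0`, or `a ≠ 0` and every `r` with `a = r * b` is a unit. -/
def VSAssoc {S : Type*} [CommRing S] (a b : S) : Prop :=
  a ∣ b ∧ b ∣ a ∧ ((a = 0 ∧ b = 0) ∨ (a ≠ 0 ∧ ∀ r : S, a = r * b → IsUnit r))

theorem vsassoc_polynomial_iff {R : Type*} [CommRing R] (a b : R) (ha : a ≠ 0) :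
    VSAssoc (Polynomial.C a) (Polynomial.C b) ↔
      VSAssoc a b ∧ ∀ c : R, c * b = 0 → IsNilpotent c := by
  open Polynomial in
  constructor
  · rintro ⟨⟨q, hq⟩, ⟨p, hp⟩, h⟩
    rcases h with ⟨h0, -⟩ | ⟨-, hu⟩
    · exact absurd (Polynomial.C_eq_zero.mp h0) ha
    refine ⟨⟨⟨q.coeff 0, ?_⟩, ⟨p.coeff 0, ?_⟩, Or.inr ⟨ha, fun r hr => ?_⟩⟩, fun c hc => ?_⟩
    · have := congrArg (fun f => Polynomial.coeff f 0) hq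
      simpa using this
    · have := congrArg (fun f => Polynomial.coeff f 0) hp
      simpa using this
    · have : (C a : R[X]) = C r * C b := by rw [← C_mul, ← hr]
      exact Polynomial.isUnit_C.mp (hu _ this)
    · set k := p.natDegree + 1 with hk
      have hpb : (C a : R[X]) = (p + C c * X ^ k) * C b := by
        rw [add_mul, mul_comm p (C b), ← hp]
        have : (C c : R[X]) * X ^ k * C b = 0 := by
          rw [mul_comm, ← mul_assoc, ← C_mul, mul_comm b c, hc]
          simp
        rw [this, add_zero]
      have hunit : IsUnit (p + C c * X ^ k) := hu _ hpb
      have := (Polynomial.isUnit_iff_coeff_isUnit_isNilpotent.mp hunit).2 k (by omega)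
      have hcoef : (p + C c * X ^ k).coeff k = c := by
        rw [Polynomial.coeff_add, Polynomial.coeff_C_mul, Polynomial.coeff_X_pow,
          Polynomial.coeff_eq_zero_of_natDegree_lt (by omega)]
        simp
      rwa [hcoef] at this
  · rintro ⟨⟨⟨q, hq⟩, ⟨p, hp⟩, h⟩, hnil⟩
    rcases h with ⟨h0, -⟩ | ⟨-, hu⟩
    · exact absurd h0 ha
    refine ⟨⟨C q, by rw [← C_mul, hq]⟩, ⟨C p, by rw [← C_mul, hp]⟩,
      Or.inr ⟨by simpa using ha, fun r hr => ?_⟩⟩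
    rw [Polynomial.isUnit_iff_coeff_isUnit_isNilpotent]
    constructor
    · apply hu
      have := congrArg (fun f => Polynomial.coeff f 0) hr
      simpa using this
    · intro i hi
      apply hnil
      have := congrArg (fun f => Polynomial.coeff f i) hr
      simp [Polynomial.coeff_C, hi] at this
      exact this.symm
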